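/- There exist K > 0 and n₀ ∈ ℕ such that for every integer n ≥ n₀ and every arithmetic progression of length k ≥ 2 contained in F_n (i.e., a ∈ ℝ, t > 0 with a + i·t ∈ F_n for all integers 0 ≤ i < k), one has k ≤ K·n². -/

import Mathlib

/-- The Gauss map `x ↦ {1/x}`. -/
noncomputable def gaussMap (x : ℝ) : ℝ := Int.fract (1 / x)

/-- `Fset n` is the set of irrational numbers in `(0,1)` all of whose continued
fraction partial quotients are at most `n`. -/
noncomputable def Fset (n : ℕ) : Set ℝ :=
  {x | Irrational x ∧ x ∈ Set.Ioo (0 : ℝ) 1 ∧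
    ∀ k : ℕ, ⌊1 / (gaussMap^[k] x)⌋ ≤ (n : ℤ)}

namespace StmtAux

variable {n : ℕ} {x : ℝ}

lemma fpos (h : x ∈ Fset n) : 0 < x := h.2.1.1

lemma flt_one (h : x ∈ Fset n) : x < 1 := h.2.1.2

lemma firr (h : x ∈ Fset n) : Irrational x := h.1

lemma one_lt_inv (h : x ∈ Fset n) : 1 < 1 / x :=
  one_lt_one_div (fpos h) (flt_one h)

lemma digit_le (h : x ∈ Fset n) : ⌊1 / x⌋ ≤ (n : ℤ) := by
  have h0 := h.2.2 0
  simpa using h0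

lemma one_le_digit (h : x ∈ Fset n) : 1 ≤ ⌊1 / x⌋ :=
  Int.le_floor.mpr (by exact_mod_cast (one_lt_inv h).le)

lemma gauss_eq : gaussMap x = 1 / x - (⌊1 / x⌋ : ℝ) := rfl

lemma gauss_mem (h : x ∈ Fset n) : gaussMap x ∈ Fset n := by
  have hirr : Irrational (1 / x) := by
    simpa [one_div] using (firr h).inv
  have hgirr : Irrational (gaussMap x) := by
    rw [gauss_eq]
    exact hirr.sub_intCast _
  refine ⟨hgirr, ⟨?_, ?_⟩, ?_⟩
  · exact lt_of_le_of_ne (Int.fract_nonneg (1 / x)) (fun e => hgirr.ne_zero e.symm)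
  · exact Int.fract_lt_one _
  · intro k
    have hk := h.2.2 (k + 1)
    rwa [Function.iterate_succ_apply] at hk

lemma gauss_gt (h : x ∈ Fset n) : 1 / ((n : ℝ) + 1) < gaussMap x := by
  have hg := gauss_mem h
  have h1 : (1 : ℝ) / gaussMap x < (⌊1 / gaussMap x⌋ : ℝ) + 1 := Int.lt_floor_add_one _
  have h2 : ((⌊1 / gaussMap x⌋ : ℤ) : ℝ) ≤ (n : ℝ) := by exact_mod_cast digit_le hg
  have hp : 0 < gaussMap x := fpos hg
  have h3 : (1 : ℝ) / gaussMap x < (n : ℝ) + 1 := by linarith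
  rw [div_lt_iff₀ hp] at h3
  rw [div_lt_iff₀ (by positivity)]
  linarith

/-- key upper bound: `x < 1/(⌊1/x⌋ + 1/(n+1))`. -/
lemma fupper (h : x ∈ Fset n) : x < 1 / ((⌊1 / x⌋ : ℝ) + 1 / ((n : ℝ) + 1)) := by
  have hg := gauss_gt h
  rw [gauss_eq] at hg
  have hkey : (⌊1 / x⌋ : ℝ) + 1 / ((n : ℝ) + 1) < 1 / x := by linarith
  have hm : (1 : ℝ) ≤ (⌊1 / x⌋ : ℝ) := by exact_mod_cast one_le_digit h
  have hd : 0 < (⌊1 / x⌋ : ℝ) + 1 / ((n : ℝ) + 1) := by positivity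
  have := one_div_lt_one_div_of_lt hd hkey
  rwa [one_div_one_div] at this

/-- key lower bound: `1/(⌊1/x⌋ + 1) < x`. -/
lemma flower (h : x ∈ Fset n) : 1 / ((⌊1 / x⌋ : ℝ) + 1) < x := by
  have h1 : (1 : ℝ) / x < (⌊1 / x⌋ : ℝ) + 1 := Int.lt_floor_add_one _
  have hp : 0 < (1 : ℝ) / x := by
    have := fpos h; positivity
  have := one_div_lt_one_div_of_lt hp h1
  rwa [one_div_one_div] at this

/-- every element of `Fset n` is below `(n+1)/(n+2)`. -/
lemma flt_ratio (h : x ∈ Fset n) : x < ((n : ℝ) + 1) / ((n : ℝ) + 2) := by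
  have h1 := fupper h
  have hm : (1 : ℝ) ≤ (⌊1 / x⌋ : ℝ) := by exact_mod_cast one_le_digit h
  have hn0 : (0 : ℝ) < (n : ℝ) + 1 := by positivity
  have h2 : 1 / ((⌊1 / x⌋ : ℝ) + 1 / ((n : ℝ) + 1)) ≤ 1 / (1 + 1 / ((n : ℝ) + 1)) := by
    apply one_div_le_one_div_of_le
    · positivity
    · linarith
  have h3 : 1 / (1 + 1 / ((n : ℝ) + 1)) = ((n : ℝ) + 1) / ((n : ℝ) + 2) := by
    rw [show (1 : ℝ) + 1 / ((n : ℝ) + 1) = ((n : ℝ) + 2) / ((n : ℝ) + 1) by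
      field_simp; ring, one_div_div]
  calc x < 1 / ((⌊1 / x⌋ : ℝ) + 1 / ((n : ℝ) + 1)) := h1
    _ ≤ 1 / (1 + 1 / ((n : ℝ) + 1)) := h2
    _ = ((n : ℝ) + 1) / ((n : ℝ) + 2) := h3

/-- telescoping lower bound for sums of gaps. -/
lemma telescope {k : ℕ} {y : ℕ → ℝ} {g : ℝ}
    (hlow : ∀ i, i + 1 < k → g ≤ y (i + 1) - y i) :
    ∀ d i, i + d < k → (d : ℝ) * g ≤ y (i + d) - y i := by
  intro d
  induction d with
  | zero => intro i _; simp
  | succ d ih =>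
    intro i hik
    have h1 : i + d < k := by omega
    have h2 := ih i h1
    have h3 : (i + d) + 1 < k := by omega
    have h4 := hlow (i + d) h3
    have : i + (d + 1) = (i + d) + 1 := by omega
    rw [this]
    push_cast
    linarith

set_option maxHeartbeats 1000000 in
/-- The main counting lemma: a quasi-arithmetic increasing sequence in `Fset n`
with at least two distinct first digits has length at most `50 n²`. -/
lemma count (n k : ℕ) (hn : 1 ≤ n) (hk : 2 ≤ k) (y : ℕ → ℝ) (g : ℝ) (hg : 0 < g)
    (hmem : ∀ i, i < k → y i ∈ Fset n)
    (hlow : ∀ i, i + 1 < k → g ≤ y (i + 1) - y i)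
    (hhigh : ∀ i, i + 1 < k → y (i + 1) - y i ≤ 4 * g)
    (hdiff : ∃ i, i < k ∧ ⌊1 / y i⌋ ≠ ⌊1 / y (k - 1)⌋) :
    (k : ℝ) ≤ 50 * (n : ℝ) ^ 2 := by
  classical
  set d : ℕ → ℤ := fun i => ⌊1 / y i⌋ with hd
  -- monotonicity of y over pairs
  have hmono : ∀ i j : ℕ, i ≤ j → j < k → y i ≤ y j := by
    intro i j hij hj
    obtain ⟨e, rfl⟩ := Nat.exists_eq_add_of_le hij
    have := telescope hlow e i hj
    have hge : (0:ℝ) ≤ (e : ℝ) * g := by positivity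
    linarith
  have hstrict : ∀ i j : ℕ, i < j → j < k → y i < y j := by
    intro i j hij hj
    obtain ⟨e, rfl⟩ := Nat.exists_eq_add_of_le hij.le
    have he : 1 ≤ e := by omega
    have := telescope hlow e i hj
    have he1 : (1 : ℝ) ≤ (e : ℝ) := by exact_mod_cast he
    have hge : g ≤ (e : ℝ) * g := by nlinarith
    linarith
  -- digits are antitone
  have hdmono : ∀ i j : ℕ, i ≤ j → j < k → d j ≤ d i := by
    intro i j hij hj
    have hyi : 0 < y i := fpos (hmem i (lt_of_le_of_lt hij hj))
    have hyj : 0 < y j := fpos (hmem j hj)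
    have h1 : 1 / y j ≤ 1 / y i := one_div_le_one_div_of_le hyi (hmono i j hij hj)
    exact Int.floor_mono h1
  have hk1 : k - 1 < k := by omega
  set M : ℤ := d (k - 1) with hM
  have hM1 : 1 ≤ M := one_le_digit (hmem (k - 1) hk1)
  have hMn : M ≤ (n : ℤ) := digit_le (hmem (k - 1) hk1)
  have hMle : ∀ i, i < k → M ≤ d i := by
    intro i hi
    exact hdmono i (k - 1) (by omega) hk1
  -- least index with digit M
  have hex : ∃ i, i < k ∧ d i = M := ⟨k - 1, hk1, rfl⟩
  set istar := Nat.find hex with histar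
  have hspec := Nat.find_spec hex
  rw [← histar] at hspec
  obtain ⟨hik, hidig⟩ := hspec
  simp only [hd] at hidig
  have hipos : 0 < istar := by
    rcases Nat.eq_zero_or_pos istar with h | h
    swap
    · exact h
    · exfalso
      obtain ⟨i0, hi0k, hi0d⟩ := hdiff
      have hd0 : d 0 = M := by rw [← h]; exact hidig
      have h1 : M ≤ d i0 := hMle i0 hi0k
      have h2 : d i0 ≤ d 0 := hdmono 0 i0 (Nat.zero_le _) hi0k
      rw [hd0] at h2
      exact hi0d (le_antisymm h2 h1)
  set jstar := istar - 1 with hjstar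
  have hjk : jstar < k := by omega
  have hjsucc : jstar + 1 = istar := by omega
  have hjd : M + 1 ≤ d jstar := by
    have h1 : M ≤ d jstar := hMle jstar hjk
    have h2 : d jstar ≠ M := by
      intro he
      have := Nat.find_min hex (m := jstar) (by omega)
      exact this ⟨hjk, he⟩
    omega
  -- real versions
  set Mr : ℝ := (M : ℝ) with hMr
  have hMr1 : (1 : ℝ) ≤ Mr := by rw [hMr]; exact_mod_cast hM1
  have hMrn : Mr ≤ (n : ℝ) := by rw [hMr]; exact_mod_cast hMn
  set s : ℝ := 1 / ((n : ℝ) + 1) with hs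
  have hs0 : 0 < s := by positivity
  have hs1 : s ≤ 1 := by
    have h1 : (1 : ℝ) ≤ (n : ℝ) := by exact_mod_cast hn
    rw [hs, div_le_one (by positivity)]
    linarith
  -- crossing gap bound
  have hyi_low : 1 / (Mr + 1) < y istar := by
    have := flower (hmem istar hik)
    rwa [show ((⌊1 / y istar⌋ : ℤ) : ℝ) = Mr by rw [hMr]; exact_mod_cast hidig] at this
  have hyj_up : y jstar < 1 / (Mr + 1 + s) := by
    have h1 := fupper (hmem jstar hjk)
    have h2 : Mr + 1 + s ≤ (⌊1 / y jstar⌋ : ℝ) + s := by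
      have : (M : ℝ) + 1 ≤ ((d jstar : ℤ) : ℝ) := by exact_mod_cast hjd
      simp only [hMr]
      linarith
    calc y jstar < 1 / ((⌊1 / y jstar⌋ : ℝ) + s) := h1
      _ ≤ 1 / (Mr + 1 + s) := by
          apply one_div_le_one_div_of_le (by positivity) h2
  have hcross : y istar - y jstar ≤ 4 * g := by
    have := hhigh jstar (by omega)
    rwa [hjsucc] at this
  have hgap_lb : 1 / (Mr + 1) - 1 / (Mr + 1 + s) ≤ 4 * g := by
    have := hcross
    linarith
  -- 1/(M+1) - 1/(M+1+s) = s/((M+1)(M+1+s)) ≥ s/((M+1)(M+2))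
  have hgap_key : (1 : ℝ) ≤ 4 * g * ((n : ℝ) + 1) * ((Mr + 1) * (Mr + 2)) := by
    have h1 : 1 / (Mr + 1) - 1 / (Mr + 1 + s) = s / ((Mr + 1) * (Mr + 1 + s)) := by
      rw [div_sub_div _ _ (by positivity) (by positivity : (Mr + 1 + s) ≠ 0)]
      ring_nf
    have h2 : s / ((Mr + 1) * (Mr + 2)) ≤ s / ((Mr + 1) * (Mr + 1 + s)) := by
      apply div_le_div_of_nonneg_left hs0.le (by positivity)
      nlinarith
    have h3 : s / ((Mr + 1) * (Mr + 2)) ≤ 4 * g := by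
      rw [h1] at hgap_lb
      linarith
    rw [hs] at h3
    rw [div_le_iff₀ (by positivity)] at h3
    have hne : ((n : ℝ) + 1) ≠ 0 := by positivity
    rw [div_le_iff₀ (by positivity)] at h3
    nlinarith
  -- left count
  have hy0 : 0 < y 0 := fpos (hmem 0 (by omega))
  have hleft : (jstar : ℝ) * g ≤ y jstar - y 0 := by
    have := telescope hlow jstar 0 (by omega)
    simpa using this
  have hleft2 : (jstar : ℝ) * g ≤ 1 / (Mr + 1) := by
    have h4 : 1 / (Mr + 1 + s) ≤ 1 / (Mr + 1) := by
      apply one_div_le_one_div_of_le (by positivity)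
      linarith
    linarith
  -- right count
  have hykup : y (k - 1) < 1 / Mr := by
    have h1 := fupper (hmem (k - 1) hk1)
    have h2 : 1 / ((⌊1 / y (k-1)⌋ : ℝ) + s) ≤ 1 / Mr := by
      apply one_div_le_one_div_of_le (by positivity)
      have heq : ((⌊1 / y (k-1)⌋ : ℤ) : ℝ) = Mr := by
        rw [hMr, hM]
      rw [heq]
      linarith
    calc y (k-1) < 1 / ((⌊1 / y (k-1)⌋ : ℝ) + s) := h1
      _ ≤ 1 / Mr := h2
  have hright : ((k - 1 - istar : ℕ) : ℝ) * g ≤ y (k - 1) - y istar := by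
    have h1 : istar + (k - 1 - istar) = k - 1 := by omega
    have := telescope hlow (k - 1 - istar) istar (by omega)
    rwa [h1] at this
  have hright2 : ((k - 1 - istar : ℕ) : ℝ) * g ≤ 1 / (Mr * (Mr + 1)) := by
    have h5 : 1 / Mr - 1 / (Mr + 1) = 1 / (Mr * (Mr + 1)) := by
      field_simp
      ring
    linarith
  -- assemble
  have hcast : ((k - 1 - istar : ℕ) : ℝ) = (k : ℝ) - 1 - (istar : ℝ) := by
    have h1 : istar ≤ k - 1 := by omega
    have h2 : 1 ≤ k := by omega
    push_cast [Nat.cast_sub h1, Nat.cast_sub h2]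
    ring
  have hjcast : (jstar : ℝ) = (istar : ℝ) - 1 := by
    have h1 : 1 ≤ istar := hipos
    push_cast [hjstar, Nat.cast_sub h1]
    ring
  -- bounds on 1/(g(M+1)) etc from hgap_key
  have hA : 1 / (Mr + 1) ≤ 4 * g * ((n : ℝ) + 1) * (Mr + 2) := by
    rw [div_le_iff₀ (by positivity)]
    nlinarith
  have hB : 1 / (Mr * (Mr + 1)) ≤ 12 * g * ((n : ℝ) + 1) := by
    rw [div_le_iff₀ (by positivity)]
    nlinarith
  -- k ≤ 2 + (above)/g
  have hknr : (k : ℝ) ≤ 2 + 4 * ((n : ℝ) + 1) * (Mr + 2) + 12 * ((n : ℝ) + 1) := by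
    have h1 : ((istar : ℝ) - 1) * g ≤ 4 * g * ((n : ℝ) + 1) * (Mr + 2) := by
      rw [← hjcast]
      exact le_trans hleft2 hA
    have h2 : ((k : ℝ) - 1 - (istar : ℝ)) * g ≤ 12 * g * ((n : ℝ) + 1) := by
      rw [← hcast]
      exact le_trans hright2 hB
    have h3 : (istar : ℝ) - 1 ≤ 4 * ((n : ℝ) + 1) * (Mr + 2) := by
      nlinarith
    have h4 : (k : ℝ) - 1 - (istar : ℝ) ≤ 12 * ((n : ℝ) + 1) := by
      nlinarith
    linarith
  have hnn : (1 : ℝ) ≤ (n : ℝ) := by exact_mod_cast hn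
  nlinarith [hknr, hMrn, hnn, sq_nonneg ((n : ℝ) - 1)]

set_option maxHeartbeats 1000000 in
/-- Main induction: a monotone "Möbius-arithmetic" sequence inside `Fset n`,
whose gaps are `t (C y i + D)(C y (i+1) + D)` with `0 ≤ C ≤ D`, `1 ≤ D`,
and all gaps at least `ν^r` where `ν = ((n+1)/(n+2))²`, has length `≤ 50 n²`. -/
lemma mainlem (n : ℕ) (hn : 1 ≤ n) (t : ℝ) (ht : 0 < t) :
    ∀ r k : ℕ, 2 ≤ k → ∀ (y : ℕ → ℝ) (C D : ℝ),
      0 ≤ C → C ≤ D → 1 ≤ D →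
      (∀ i, i < k → y i ∈ Fset n) →
      ((∀ i, i + 1 < k → y i < y (i + 1)) ∨ (∀ i, i + 1 < k → y (i + 1) < y i)) →
      (∀ i, i + 1 < k → |y (i + 1) - y i| = t * ((C * y i + D) * (C * y (i + 1) + D))) →
      (∀ i, i + 1 < k → ((((n : ℝ) + 1) / ((n : ℝ) + 2)) ^ 2) ^ r ≤ |y (i + 1) - y i|) →
      (k : ℝ) ≤ 50 * (n : ℝ) ^ 2 := by
  intro r
  induction r with
  | zero =>
    intro k hk y C D _ _ _ hmem _ _ hsc
    exfalso
    have h1 := hsc 0 (by omega)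
    simp only [pow_zero, Nat.zero_add] at h1
    have hy0 := hmem 0 (by omega)
    have hy1 := hmem 1 (by omega)
    have habs : |y (0 + 1) - y 0| < 1 := by
      have p0 := fpos hy0; have p1 := flt_one hy1
      have p2 := fpos hy1; have p3 := flt_one hy0
      rw [abs_sub_lt_iff]
      constructor <;> simp <;> linarith
    simp only [Nat.zero_add] at habs
    linarith
  | succ r ih =>
    intro k hk y C D hC hCD hD hmem hmono hgapeq hsc
    set ν : ℝ := (((n : ℝ) + 1) / ((n : ℝ) + 2)) ^ 2 with hν
    have hνpos : 0 < ν := by rw [hν]; positivity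
    by_cases hall : ∀ i, i < k → ⌊1 / y i⌋ = ⌊1 / y 0⌋
    · -- all first digits equal: renormalize by the Gauss map
      set m : ℤ := ⌊1 / y 0⌋ with hm
      have hm1 : 1 ≤ m := one_le_digit (hmem 0 (by omega))
      have hmr1 : (1 : ℝ) ≤ (m : ℝ) := by exact_mod_cast hm1
      set z : ℕ → ℝ := fun i => 1 / y i - (m : ℝ) with hzdef
      have hzg : ∀ i, i < k → z i = gaussMap (y i) := by
        intro i hi
        simp only [hzdef]
        rw [gauss_eq, hall i hi]
      have hzmem : ∀ i, i < k → z i ∈ Fset n := by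
        intro i hi
        rw [hzg i hi]
        exact gauss_mem (hmem i hi)
      have hypos : ∀ i, i < k → 0 < y i := fun i hi => fpos (hmem i hi)
      have hyrat : ∀ i, i < k → y i < ((n : ℝ) + 1) / ((n : ℝ) + 2) :=
        fun i hi => flt_ratio (hmem i hi)
      -- gap identity for z
      have hzgap : ∀ i, i + 1 < k →
          |z (i + 1) - z i| =
            t * ((D * z i + (C + D * (m : ℝ))) * (D * z (i + 1) + (C + D * (m : ℝ)))) := by
        intro i hik
        have hi : i < k := by omega
        have hyi := hypos i hi
        have hyi1 := hypos (i + 1) hik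
        have e1 : z (i + 1) - z i = (y i - y (i + 1)) / (y i * y (i + 1)) := by
          simp only [hzdef]
          field_simp
          ring
        have e2 : |z (i + 1) - z i| = |y (i + 1) - y i| / (y i * y (i + 1)) := by
          rw [e1, abs_div, abs_of_pos (by positivity : (0:ℝ) < y i * y (i + 1)),
            abs_sub_comm]
        have e3 : C * y i + D = (D * z i + (C + D * (m : ℝ))) * y i := by
          simp only [hzdef]
          field_simp
          ring
        have e4 : C * y (i + 1) + D = (D * z (i + 1) + (C + D * (m : ℝ))) * y (i + 1) := by
          simp only [hzdef]
          field_simp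
          ring
        rw [e2, hgapeq i hik, e3, e4]
        field_simp
      -- gap lower bound for z
      have hzsc : ∀ i, i + 1 < k → (ν : ℝ) ^ r ≤ |z (i + 1) - z i| := by
        intro i hik
        have hi : i < k := by omega
        have hyi := hypos i hi
        have hyi1 := hypos (i + 1) hik
        have hprod : y i * y (i + 1) ≤ ν := by
          have r1 := hyrat i hi
          have r2 := hyrat (i + 1) hik
          have hrat0 : (0:ℝ) < ((n : ℝ) + 1) / ((n : ℝ) + 2) := by positivity
          rw [hν, sq]
          nlinarith
        have e1 : z (i + 1) - z i = (y i - y (i + 1)) / (y i * y (i + 1)) := by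
          simp only [hzdef]
          field_simp
          ring
        have e2 : |z (i + 1) - z i| = |y (i + 1) - y i| / (y i * y (i + 1)) := by
          rw [e1, abs_div, abs_of_pos (by positivity : (0:ℝ) < y i * y (i + 1)),
            abs_sub_comm]
        have h1 := hsc i hik
        rw [e2, le_div_iff₀ (by positivity)]
        have h2 : ν ^ r * (y i * y (i + 1)) ≤ ν ^ r * ν := by
          have : (0:ℝ) ≤ ν ^ r := by positivity
          nlinarith
        calc ν ^ r * (y i * y (i + 1)) ≤ ν ^ r * ν := h2
          _ = ν ^ (r + 1) := by rw [pow_succ]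
          _ ≤ |y (i + 1) - y i| := h1
      -- monotonicity flips
      have hzmono : (∀ i, i + 1 < k → z i < z (i + 1)) ∨ (∀ i, i + 1 < k → z (i + 1) < z i) := by
        rcases hmono with hinc | hdec
        · right
          intro i hik
          have hi : i < k := by omega
          have hyi := hypos i hi
          have hyi1 := hypos (i + 1) hik
          have := hinc i hik
          have h1 : 1 / y (i + 1) < 1 / y i := by
            apply one_div_lt_one_div_of_lt hyi this
          simp only [hzdef]
          linarith
        · left
          intro i hik
          have hi : i < k := by omega
          have hyi := hypos i hi
          have hyi1 := hypos (i + 1) hik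
          have := hdec i hik
          have h1 : 1 / y i < 1 / y (i + 1) := by
            apply one_div_lt_one_div_of_lt hyi1 this
          simp only [hzdef]
          linarith
      exact ih k hk z D (C + D * (m : ℝ)) (by linarith) (by nlinarith) (by nlinarith)
        hzmem hzmono hzgap hzsc
    · -- at least two distinct digits: apply the counting lemma
      push_neg at hall
      obtain ⟨i0, hi0k, hi0d⟩ := hall
      set g : ℝ := t * D ^ 2 with hg
      have hgpos : 0 < g := by rw [hg]; positivity
      have hbounds : ∀ i, i + 1 < k → g ≤ |y (i + 1) - y i| ∧ |y (i + 1) - y i| ≤ 4 * g := by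
        intro i hik
        have hi : i < k := by omega
        have hyi := hmem i hi
        have hyi1 := hmem (i + 1) hik
        have p1 := fpos hyi; have p2 := flt_one hyi
        have p3 := fpos hyi1; have p4 := flt_one hyi1
        have hfac1 : D ≤ C * y i + D := by nlinarith
        have hfac2 : D ≤ C * y (i + 1) + D := by nlinarith
        have hfac3 : C * y i + D ≤ 2 * D := by nlinarith
        have hfac4 : C * y (i + 1) + D ≤ 2 * D := by nlinarith
        rw [hgapeq i hik, hg]
        have hD0 : (0:ℝ) < D := by linarith
        have hlo : D * D ≤ (C * y i + D) * (C * y (i + 1) + D) :=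
          mul_le_mul hfac1 hfac2 (by linarith) (by nlinarith)
        have hhi : (C * y i + D) * (C * y (i + 1) + D) ≤ (2 * D) * (2 * D) :=
          mul_le_mul hfac3 hfac4 (by nlinarith) (by nlinarith)
        constructor
        · nlinarith
        · nlinarith
      have hdig0 : ∀ (u v : ℕ → ℝ), (∀ i, i < k → u i ∈ Fset n) → True := fun _ _ _ => trivial
      rcases hmono with hinc | hdec
      · -- increasing case: apply count directly
        apply count n k hn hk y g hgpos hmem
        · intro i hik
          have h1 := (hbounds i hik).1
          have h2 := hinc i hik
          rwa [abs_of_pos (by linarith)] at h1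
        · intro i hik
          have h1 := (hbounds i hik).2
          have h2 := hinc i hik
          rwa [abs_of_pos (by linarith)] at h1
        · by_cases hlast : ⌊1 / y 0⌋ = ⌊1 / y (k - 1)⌋
          · exact ⟨i0, hi0k, by rw [← hlast]; exact hi0d⟩
          · exact ⟨0, by omega, hlast⟩
      · -- decreasing case: reverse the sequence
        set w : ℕ → ℝ := fun i => y (k - 1 - i) with hwdef
        have hwmem : ∀ i, i < k → w i ∈ Fset n := by
          intro i hi
          exact hmem (k - 1 - i) (by omega)
        apply count n k hn hk w g hgpos hwmem
        · intro i hik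
          have hj1 : (k - 1 - (i + 1)) + 1 = k - 1 - i := by omega
          have hj2 : (k - 1 - (i + 1)) + 1 < k := by omega
          have h1 := (hbounds (k - 1 - (i + 1)) hj2).1
          have h2 := hdec (k - 1 - (i + 1)) hj2
          rw [hj1] at h1 h2
          simp only [hwdef]
          rwa [abs_of_neg (by linarith), neg_sub] at h1
        · intro i hik
          have hj1 : (k - 1 - (i + 1)) + 1 = k - 1 - i := by omega
          have hj2 : (k - 1 - (i + 1)) + 1 < k := by omega
          have h1 := (hbounds (k - 1 - (i + 1)) hj2).2
          have h2 := hdec (k - 1 - (i + 1)) hj2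
          rw [hj1] at h1 h2
          simp only [hwdef]
          rwa [abs_of_neg (by linarith), neg_sub] at h1
        · have hw0 : w (k - 1) = y 0 := by
            simp only [hwdef]
            congr 1
            omega
          have hwi : w (k - 1 - i0) = y i0 := by
            simp only [hwdef]
            congr 1
            omega
          refine ⟨k - 1 - i0, by omega, ?_⟩
          rw [hwi, hw0]
          exact hi0d

end StmtAux

theorem stmt3 :
    ∃ K : ℝ, 0 < K ∧ ∃ n₀ : ℕ,
      ∀ n : ℕ, n₀ ≤ n →
        ∀ (a t : ℝ) (k : ℕ), 0 < t → 2 ≤ k →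
          (∀ i : ℕ, i < k → a + i * t ∈ Fset n) →
          (k : ℝ) ≤ K * n ^ 2 := by
  refine ⟨50, by norm_num, 1, ?_⟩
  intro n hn a t k ht hk hAP
  have hrat1 : ((n : ℝ) + 1) / ((n : ℝ) + 2) < 1 := by
    rw [div_lt_one (by positivity)]
    linarith
  have hν1 : (((n : ℝ) + 1) / ((n : ℝ) + 2)) ^ 2 < 1 := by
    have h0 : (0:ℝ) ≤ ((n : ℝ) + 1) / ((n : ℝ) + 2) := by positivity
    nlinarith
  obtain ⟨r, hr⟩ := exists_pow_lt_of_lt_one ht hν1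
  have hmain := StmtAux.mainlem n hn t ht r k hk (fun i => a + (i : ℝ) * t) 0 1
    le_rfl zero_le_one le_rfl
    (by intro i hi; exact hAP i hi)
    (Or.inl (by
      intro i hik
      have : ((i : ℝ) + 1) * t = (i : ℝ) * t + t := by ring
      push_cast
      nlinarith))
    (by
      intro i hik
      push_cast
      rw [show a + ((i : ℝ) + 1) * t - (a + (i : ℝ) * t) = t by ring, abs_of_pos ht]
      ring)
    (by
      intro i hik
      push_cast
      rw [show a + ((i : ℝ) + 1) * t - (a + (i : ℝ) * t) = t by ring, abs_of_pos ht]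
      exact hr.le)
  exact hmain
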